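/- Let n ≥ 3, 2 ≤ i_1 ≤ n−2, 1 ≤ t_2 ≤ i_1 − 1, 1 ≤ i_2 ≤ n−2 with i_2 + t_2 ≤ i_1. Define C_1 = ... = C_{i_2} = C_n = [n], C_{i_2+1} = ... = C_{i_1} = [n] \ {t_2+1,...,t_2+i_2}, C_{i_1+1} = ... = C_{n−1} = [n] \ [i_1]. Then {Σ_{k=1}^n e_{j_k} : j_k ∈ C_k} = {α ∈ ℕ^n : |α| = n, α_1 + ... + α_{i_1} ≤ i_1 + 1, α_{t_2+1} + ... + α_{t_2+i_2} ≤ i_2 + 1}. -/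

import Mathlib

open Finset

lemma cardFinFilter (n : ℕ) (P : ℕ → Prop) [DecidablePred P] :
    (Finset.univ.filter (fun k : Fin n => P k.val)).card = ((Finset.range n).filter P).card := by
  rw [Finset.card_filter, Finset.card_filter,
    Fin.sum_univ_eq_sum_range (fun i => if P i then 1 else 0)]

lemma cardlt (n a : ℕ) (h : a ≤ n) :
    (Finset.univ.filter (fun c : Fin n => c.val < a)).card = a := by
  rw [cardFinFilter n (fun i => i < a)]
  have : (Finset.range n).filter (fun i => i < a) = Finset.range a := by
    ext i; simp; omega
  rw [this, Finset.card_range]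

lemma cardU (n a : ℕ) (h : a + 2 ≤ n) :
    (Finset.univ.filter (fun k : Fin n => k.val < a ∨ k.val = n - 1)).card = a + 1 := by
  rw [cardFinFilter n (fun i => i < a ∨ i = n - 1)]
  have : (Finset.range n).filter (fun i => i < a ∨ i = n - 1)
      = insert (n-1) (Finset.range a) := by
    ext i; simp; omega
  rw [this, Finset.card_insert_of_notMem (by simp; omega), Finset.card_range]

lemma cardMid (n a : ℕ) (h : a + 2 ≤ n) :
    (Finset.univ.filter (fun k : Fin n => ¬(k.val < a ∨ k.val = n - 1))).card = n - 1 - a := by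
  rw [cardFinFilter n (fun i => ¬(i < a ∨ i = n - 1))]
  have : (Finset.range n).filter (fun i => ¬(i < a ∨ i = n - 1)) = Finset.Ico a (n-1) := by
    ext i; simp; omega
  rw [this, Nat.card_Ico]

lemma cardT (n : ℕ) (α : Fin n → ℕ) (hα : ∀ m, α m ≤ n) (S : Set (Fin n))
    [DecidablePred (· ∈ S)] :
    (Finset.univ.filter (fun p : Fin n × Fin n => p.1 ∈ S ∧ p.2.val < α p.1)).card
      = ∑ m ∈ Finset.univ.filter (fun m : Fin n => m ∈ S), α m := by
  rw [Finset.card_filter, Fintype.sum_prod_type, Finset.sum_filter]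
  apply Finset.sum_congr rfl
  intro m _
  by_cases hm : m ∈ S
  · simp only [hm, true_and, if_true]
    have := cardlt n (α m) (hα m)
    rw [Finset.card_filter] at this
    exact this
  · simp [hm]

theorem stmt6 (n i1 i2 t2 : ℕ) (hn : 3 ≤ n) (hi1a : 2 ≤ i1) (hi1b : i1 ≤ n - 2)
    (ht2a : 1 ≤ t2) (ht2b : t2 ≤ i1 - 1) (hi2a : 1 ≤ i2) (hi2b : i2 ≤ n - 2)
    (hsum : i2 + t2 ≤ i1)
    (C : Fin n → Set (Fin n))
    (hC : ∀ k : Fin n,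
      C k = if k.val < i2 ∨ k.val = n - 1 then (Set.univ : Set (Fin n))
            else if k.val < i1 then {m : Fin n | ¬ (t2 ≤ m.val ∧ m.val < t2 + i2)}
            else {m : Fin n | i1 ≤ m.val}) :
    {α : Fin n → ℕ | ∃ j : Fin n → Fin n, (∀ k, j k ∈ C k) ∧ α = ∑ k, Pi.single (j k) 1} =
    {α : Fin n → ℕ | ∑ k, α k = n ∧
      ∑ k ∈ Finset.univ.filter (fun m : Fin n => m.val < i1), α k ≤ i1 + 1 ∧
      ∑ k ∈ Finset.univ.filter (fun m : Fin n => t2 ≤ m.val ∧ m.val < t2 + i2), α k ≤ i2 + 1} := by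
  classical
  have hi1n : i1 + 2 ≤ n := by omega
  have hi2n : i2 + 2 ≤ n := by omega
  ext α
  simp only [Set.mem_setOf_eq]
  constructor
  · rintro ⟨j, hj, rfl⟩
    -- pointwise value
    have happ : ∀ m : Fin n, (∑ k : Fin n, (Pi.single (j k) 1 : Fin n → ℕ)) m
        = ∑ k : Fin n, if m = j k then 1 else 0 := by
      intro m
      rw [Finset.sum_apply]
      exact Finset.sum_congr rfl fun k _ => by rw [Pi.single_apply]
    have hone : ∀ a : Fin n, (∑ m : Fin n, if m = a then (1:ℕ) else 0) = 1 := by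
      intro a
      rw [Finset.sum_ite_eq' Finset.univ a (fun _ => (1:ℕ))]
      simp
    -- sum over any filter counts preimage
    have hcount : ∀ (P : Fin n → Prop) [DecidablePred P],
        (∑ m ∈ Finset.univ.filter P, (∑ k : Fin n, (Pi.single (j k) 1 : Fin n → ℕ)) m)
          = (Finset.univ.filter (fun k => P (j k))).card := by
      intro P _
      rw [Finset.card_filter]
      calc (∑ m ∈ Finset.univ.filter P, (∑ k : Fin n, (Pi.single (j k) 1 : Fin n → ℕ)) m)
          = ∑ m ∈ Finset.univ.filter P, ∑ k : Fin n, if m = j k then 1 else 0 := by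
            exact Finset.sum_congr rfl fun m _ => happ m
        _ = ∑ k : Fin n, ∑ m ∈ Finset.univ.filter P, if m = j k then 1 else 0 :=
            Finset.sum_comm
        _ = ∑ k : Fin n, if P (j k) then 1 else 0 := by
            refine Finset.sum_congr rfl fun k _ => ?_
            rw [Finset.sum_ite_eq' (Finset.univ.filter P) (j k) (fun _ => (1:ℕ))]
            simp
    refine ⟨?_, ?_, ?_⟩
    · calc (∑ k : Fin n, (∑ k' : Fin n, (Pi.single (j k') 1 : Fin n → ℕ)) k)
          = ∑ k : Fin n, ∑ k' : Fin n, if k = j k' then 1 else 0 := by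
            exact Finset.sum_congr rfl fun k _ => happ k
        _ = ∑ k' : Fin n, ∑ k : Fin n, if k = j k' then 1 else 0 := Finset.sum_comm
        _ = ∑ k' : Fin n, 1 := Finset.sum_congr rfl fun k' _ => hone (j k')
        _ = n := by simp
    · rw [hcount (fun m => m.val < i1)]
      have hsub : Finset.univ.filter (fun k => (j k).val < i1)
          ⊆ Finset.univ.filter (fun k : Fin n => k.val < i1 ∨ k.val = n - 1) := by
        intro k hk
        simp only [Finset.mem_filter, Finset.mem_univ, true_and] at hk ⊢
        by_contra hcon
        push_neg at hcon
        have h1 : ¬ (k.val < i2 ∨ k.val = n - 1) := by omega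
        have h2 : ¬ k.val < i1 := by omega
        have := hj k
        rw [hC k, if_neg h1, if_neg h2] at this
        simp only [Set.mem_setOf_eq] at this
        omega
      calc (Finset.univ.filter (fun k => (j k).val < i1)).card
          ≤ (Finset.univ.filter (fun k : Fin n => k.val < i1 ∨ k.val = n - 1)).card :=
            Finset.card_le_card hsub
        _ = i1 + 1 := cardU n i1 hi1n
    · rw [hcount (fun m => t2 ≤ m.val ∧ m.val < t2 + i2)]
      have hsub : Finset.univ.filter (fun k => t2 ≤ (j k).val ∧ (j k).val < t2 + i2)
          ⊆ Finset.univ.filter (fun k : Fin n => k.val < i2 ∨ k.val = n - 1) := by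
        intro k hk
        simp only [Finset.mem_filter, Finset.mem_univ, true_and] at hk ⊢
        by_contra hcon
        have := hj k
        rw [hC k, if_neg hcon] at this
        by_cases h2 : k.val < i1
        · rw [if_pos h2] at this
          simp only [Set.mem_setOf_eq] at this
          exact this hk
        · rw [if_neg h2] at this
          simp only [Set.mem_setOf_eq] at this
          omega
      calc (Finset.univ.filter (fun k => t2 ≤ (j k).val ∧ (j k).val < t2 + i2)).card
          ≤ (Finset.univ.filter (fun k : Fin n => k.val < i2 ∨ k.val = n - 1)).card :=
            Finset.card_le_card hsub
        _ = i2 + 1 := cardU n i2 hi2n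
  · rintro ⟨hs, hA, hB⟩
    have hαle : ∀ m, α m ≤ n := by
      intro m
      rw [← hs]
      exact Finset.single_le_sum (fun i _ => Nat.zero_le _) (Finset.mem_univ m)
    set t : Fin n → Finset (Fin n × Fin n) :=
      fun k => Finset.univ.filter (fun p : Fin n × Fin n => p.1 ∈ C k ∧ p.2.val < α p.1)
      with ht
    have hhall : ∀ s : Finset (Fin n), s.card ≤ (s.biUnion t).card := by
      intro s
      by_cases hU : ∃ k ∈ s, k.val < i2 ∨ k.val = n - 1
      · obtain ⟨k, hks, hk⟩ := hU
        have hCk : C k = Set.univ := by rw [hC k, if_pos hk]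
        have hcard : (t k).card = n := by
          rw [ht]
          rw [cardT n α hαle (C k), hCk]
          simpa using hs
        calc s.card ≤ Finset.univ.card := Finset.card_le_univ s
          _ = n := by simp
          _ = (t k).card := hcard.symm
          _ ≤ (s.biUnion t).card := Finset.card_le_card (Finset.subset_biUnion_of_mem t hks)
      · by_cases hM : ∃ k ∈ s, k.val < i1
        · obtain ⟨k, hks, hk⟩ := hM
          have hk2 : ¬ (k.val < i2 ∨ k.val = n - 1) := fun h => hU ⟨k, hks, h⟩
          have hCk : C k = {m : Fin n | ¬ (t2 ≤ m.val ∧ m.val < t2 + i2)} := by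
            rw [hC k, if_neg hk2, if_pos hk]
          have hsplit := Finset.sum_filter_add_sum_filter_not Finset.univ
            (fun m : Fin n => t2 ≤ m.val ∧ m.val < t2 + i2) α
          rw [hs] at hsplit
          have hcard : (t k).card
              = ∑ m ∈ Finset.univ.filter
                  (fun m : Fin n => ¬(t2 ≤ m.val ∧ m.val < t2 + i2)), α m := by
            rw [ht, cardT n α hαle (C k), hCk]
            apply Finset.sum_congr _ (fun _ _ => rfl)
            ext m
            simp [Set.mem_setOf_eq]
          have hcard2 : s.card ≤ n - 1 - i2 := by
            have hsub : s ⊆ Finset.univ.filter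
                (fun k : Fin n => ¬(k.val < i2 ∨ k.val = n - 1)) := by
              intro x hx
              simp only [Finset.mem_filter, Finset.mem_univ, true_and]
              exact fun h => hU ⟨x, hx, h⟩
            calc s.card ≤ _ := Finset.card_le_card hsub
              _ = n - 1 - i2 := cardMid n i2 hi2n
          have hfin : s.card ≤ (t k).card := by omega
          exact hfin.trans (Finset.card_le_card (Finset.subset_biUnion_of_mem t hks))
        · push_neg at hU hM
          rcases s.eq_empty_or_nonempty with rfl | ⟨k, hks⟩
          · simp
          · have hk2 : ¬ (k.val < i2 ∨ k.val = n - 1) := by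
              have := hU k hks; omega
            have hk3 : ¬ k.val < i1 := not_lt.mpr (hM k hks)
            have hCk : C k = {m : Fin n | i1 ≤ m.val} := by
              rw [hC k, if_neg hk2, if_neg hk3]
            have hsplit := Finset.sum_filter_add_sum_filter_not Finset.univ
              (fun m : Fin n => m.val < i1) α
            rw [hs] at hsplit
            have hcard : (t k).card
                = ∑ m ∈ Finset.univ.filter (fun m : Fin n => ¬ m.val < i1), α m := by
              rw [ht, cardT n α hαle (C k), hCk]
              apply Finset.sum_congr _ (fun _ _ => rfl)
              ext m
              simp [Set.mem_setOf_eq, not_lt]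
            have hcard2 : s.card ≤ n - 1 - i1 := by
              have hsub : s ⊆ Finset.univ.filter
                  (fun k : Fin n => ¬(k.val < i1 ∨ k.val = n - 1)) := by
                intro x hx
                simp only [Finset.mem_filter, Finset.mem_univ, true_and]
                have h1 := hU x hx
                have h2 := hM x hx
                omega
              calc s.card ≤ _ := Finset.card_le_card hsub
                _ = n - 1 - i1 := cardMid n i1 hi1n
            have hfin : s.card ≤ (t k).card := by omega
            exact hfin.trans (Finset.card_le_card (Finset.subset_biUnion_of_mem t hks))
    obtain ⟨f, hfinj, hft⟩ :=
      (Finset.all_card_le_biUnion_card_iff_exists_injective t).mp hhall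
    set j : Fin n → Fin n := fun k => (f k).1 with hjdef
    have hmem : ∀ k, j k ∈ C k ∧ ((f k).2 : ℕ) < α (j k) := by
      intro k
      have := hft k
      rw [ht] at this
      simpa using this
    have hβle : ∀ m : Fin n, (Finset.univ.filter (fun k => j k = m)).card ≤ α m := by
      intro m
      have hmap : ∀ k ∈ Finset.univ.filter (fun k => j k = m),
          (f k).2 ∈ Finset.univ.filter (fun c : Fin n => c.val < α m) := by
        intro k hk
        simp only [Finset.mem_filter, Finset.mem_univ, true_and] at hk ⊢
        have := (hmem k).2
        rwa [hk] at this
      have hinj : Set.InjOn (fun k => (f k).2)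
          ↑(Finset.univ.filter (fun k => j k = m)) := by
        intro k hk k' hk' he
        simp only [Finset.coe_filter, Finset.mem_univ, true_and, Set.mem_setOf_eq] at hk hk'
        apply hfinj
        have h1 : (f k).1 = (f k').1 := by
          show j k = j k'
          rw [hk, hk']
        exact Prod.ext h1 he
      calc (Finset.univ.filter (fun k => j k = m)).card
          ≤ (Finset.univ.filter (fun c : Fin n => c.val < α m)).card :=
            Finset.card_le_card_of_injOn _ hmap hinj
        _ = α m := cardlt n (α m) (hαle m)
    have hβsum : (∑ m : Fin n, (Finset.univ.filter (fun k => j k = m)).card) = n := by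
      calc ∑ m : Fin n, (Finset.univ.filter (fun k => j k = m)).card
          = ∑ m : Fin n, ∑ k : Fin n, if j k = m then 1 else 0 := by
            exact Finset.sum_congr rfl fun m _ => Finset.card_filter _ _
        _ = ∑ k : Fin n, ∑ m : Fin n, if j k = m then 1 else 0 := Finset.sum_comm
        _ = ∑ k : Fin n, 1 := by
            refine Finset.sum_congr rfl fun k _ => ?_
            rw [Finset.sum_ite_eq Finset.univ (j k) (fun _ => (1:ℕ))]
            simp
        _ = n := by simp
    have heq : ∀ m ∈ Finset.univ,
        (Finset.univ.filter (fun k => j k = m)).card = α m := by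
      rw [← Finset.sum_eq_sum_iff_of_le (fun m _ => hβle m)]
      rw [hβsum, hs]
    refine ⟨j, fun k => (hmem k).1, ?_⟩
    funext m
    have hm : (∑ k : Fin n, (Pi.single (j k) 1 : Fin n → ℕ)) m
        = (Finset.univ.filter (fun k => j k = m)).card := by
      rw [Finset.sum_apply, Finset.card_filter]
      refine Finset.sum_congr rfl fun k _ => ?_
      rw [Pi.single_apply]
      rcases eq_or_ne (j k) m with h | h
      · simp [h]
      · simp [h, Ne.symm h]
    rw [hm, heq m (Finset.mem_univ m)]
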